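/- Let $R$ be a commutative Noetherian ring, $I=(\mu_1,\dots,\mu_u)$ and $J=(\nu_1,\dots,\nu_v)$ ideals of $R$, with a positive integer $s$, $s<u$, $s\le v$, such that $(\mu_1,\dots,\mu_i)\subseteq(\nu_1,\dots,\nu_i)$ for all $1\le i\le s$. Set $r=u+v-s-1$ if $s\le v-2$ and $r=u$ if $v-1\le s\le v$. Then there exist $\gamma_1,\dots,\gamma_r\in R$ generating $I\cap J$ up to radical and satisfying $(\gamma_1,\dots,\gamma_i)\subseteq(\mu_{s+1},\dots,\mu_{s+i})$ for all $1\le i\le u-s$, and $(\gamma_1,\dots,\gamma_i)\subseteq(\mu_{s+1},\dots,\mu_u,\mu_1,\dots,\mu_{i-u+s})$ for all $u-s+1\le i\le u$. -/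

import Mathlib

open Finset in
/-- The antidiagonal index set at level `l`. -/
private def svD (u s v : ℕ) (l : ℕ) : Finset (ℕ × ℕ) :=
  (Finset.Icc 1 (u - s) ×ˢ Finset.Icc 1 v).filter (fun q => q.1 + q.2 = l + 1)

/-- The Schmitt–Vogel style generators. -/
private def svg {R : Type*} [CommRing R] (u s v : ℕ) (μ ν : ℕ → R) (l : ℕ) : R :=
  (∑ q ∈ svD u s v l, μ (s + q.1) * ν q.2) +
    (if u - s + 1 ≤ l ∧ l ≤ u then μ (l + s - u) else 0)

private lemma mem_svD {u s v l : ℕ} {q : ℕ × ℕ} :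
    q ∈ svD u s v l ↔ (1 ≤ q.1 ∧ q.1 ≤ u - s) ∧ (1 ≤ q.2 ∧ q.2 ≤ v) ∧ q.1 + q.2 = l + 1 := by
  simp [svD, Finset.mem_filter, Finset.mem_Icc, and_assoc]

private lemma span_mul_mem {R : Type*} [CommRing R] (p : Ideal R) (c : R) (S : Set R)
    (h : ∀ x ∈ S, c * x ∈ p) : ∀ x ∈ Ideal.span S, c * x ∈ p := by
  intro x hx
  refine Submodule.span_induction (p := fun x _ => c * x ∈ p) h ?_ ?_ ?_ hx
  · simp
  · intro a b _ _ ha hb; rw [mul_add]; exact p.add_mem ha hb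
  · intro a x _ hx
    rw [smul_eq_mul, mul_comm a x, ← mul_assoc]
    exact p.mul_mem_right a hx

/-- Key Schmitt–Vogel style lemma: a prime containing all the `svg`'s contains all
products `μ (s+i) * ν j` and all `μ t`, `t ≤ s`. -/
private lemma sv_key {R : Type*} [CommRing R]
    (u v s : ℕ) (μ ν : ℕ → R) (hs : 1 ≤ s) (hsu : s < u) (hsv : s ≤ v)
    (hsub : ∀ i, 1 ≤ i → i ≤ s →
      Ideal.span (μ '' Set.Icc 1 i) ≤ Ideal.span (ν '' Set.Icc 1 i))
    (r : ℕ) (hur : u ≤ r) (hvr : u - s + v - 1 ≤ r)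
    (p : Ideal R) (hp : p.IsPrime) (hg : ∀ k, 1 ≤ k → k ≤ r → svg u s v μ ν k ∈ p) :
    (∀ i j, 1 ≤ i → i ≤ u - s → 1 ≤ j → j ≤ v → μ (s + i) * ν j ∈ p) ∧
    (∀ t, 1 ≤ t → t ≤ s → μ t ∈ p) := by
  -- product of μ (s+i) with μ t is in p, provided all products μ (s+i) * ν j', j' ≤ t,
  -- are in p
  have hmixed : ∀ i t, 1 ≤ t → t ≤ s → (∀ j', 1 ≤ j' → j' ≤ t → μ (s + i) * ν j' ∈ p) →
      μ (s + i) * μ t ∈ p := by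
    intro i t ht1 ht2 hIH
    have h0 : μ t ∈ Ideal.span (ν '' Set.Icc 1 t) := by
      refine hsub t ht1 ht2 (Ideal.subset_span ?_)
      exact ⟨t, ⟨ht1, le_refl t⟩, rfl⟩
    refine span_mul_mem p (μ (s + i)) _ ?_ (μ t) h0
    rintro x ⟨j', ⟨hj1, hj2⟩, rfl⟩
    exact hIH j' hj1 hj2
  -- main level-by-level induction
  have main : ∀ l : ℕ,
      (∀ i j, 1 ≤ i → i ≤ u - s → 1 ≤ j → j ≤ v → i + j = l + 1 → μ (s + i) * ν j ∈ p) ∧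
      (u - s + 1 ≤ l → l ≤ u → μ (l + s - u) ∈ p) := by
    intro l
    induction l using Nat.strong_induction_on with
    | _ l IH =>
    have hprod : ∀ i j, 1 ≤ i → i ≤ u - s → 1 ≤ j → j ≤ v → i + j = l + 1 →
        μ (s + i) * ν j ∈ p := by
      by_contra hbad
      push_neg at hbad
      obtain ⟨i, j, hi1, hi2, hj1, hj2, hij, hnot⟩ := hbad
      have hl1 : 1 ≤ l := by omega
      have hlr : l ≤ r := by omega
      have hgl : svg u s v μ ν l ∈ p := hg l hl1 hlr
      have hmemD : (i, j) ∈ svD u s v l := mem_svD.mpr ⟨⟨hi1, hi2⟩, ⟨hj1, hj2⟩, hij⟩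
      -- every other product at level l is in p
      have hothers : ∀ q ∈ (svD u s v l).erase (i, j), μ (s + q.1) * ν q.2 ∈ p := by
        rintro ⟨i', j'⟩ hq
        have hne : (i', j') ≠ (i, j) := Finset.ne_of_mem_erase hq
        have hq' := mem_svD.mp (Finset.mem_of_mem_erase hq)
        obtain ⟨⟨hi'1, hi'2⟩, ⟨hj'1, hj'2⟩, hij'⟩ := hq'
        simp only at hi'1 hi'2 hj'1 hj'2 hij'
        have hii : i' ≠ i := by
          intro h; apply hne; simp [h]; omega
        rcases lt_or_gt_of_ne hii with hlt | hgt
        · -- i' < i : use (i', j) at level i' + j - 1 < l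
          have hlow : μ (s + i') * ν j ∈ p :=
            (IH (i' + j - 1) (by omega)).1 i' j hi'1 hi'2 hj1 hj2 (by omega)
          have : (μ (s + i) * ν j) * (μ (s + i') * ν j') ∈ p := by
            have : (μ (s + i) * ν j) * (μ (s + i') * ν j')
                = (μ (s + i') * ν j) * (μ (s + i) * ν j') := by ring
            rw [this]
            exact p.mul_mem_right _ hlow
          rcases hp.mem_or_mem this with h | h
          · exact absurd h hnot
          · exact h
        · -- i < i' : use (i, j') at level i + j' - 1 < l
          have hlow : μ (s + i) * ν j' ∈ p :=
            (IH (i + j' - 1) (by omega)).1 i j' hi1 hi2 hj'1 hj'2 (by omega)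
          have : (μ (s + i) * ν j) * (μ (s + i') * ν j') ∈ p := by
            have : (μ (s + i) * ν j) * (μ (s + i') * ν j')
                = (μ (s + i) * ν j') * (μ (s + i') * ν j) := by ring
            rw [this]
            exact p.mul_mem_right _ hlow
          rcases hp.mem_or_mem this with h | h
          · exact absurd h hnot
          · exact h
      -- the extra μ-term at level l is in p
      have hm : (if u - s + 1 ≤ l ∧ l ≤ u then μ (l + s - u) else 0) ∈ p := by
        split_ifs with hc
        · obtain ⟨hc1, hc2⟩ := hc
          set t := l + s - u with ht
          have ht1 : 1 ≤ t := by omega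
          have ht2 : t ≤ s := by omega
          have hmm : μ (s + i) * μ t ∈ p := by
            refine hmixed i t ht1 ht2 ?_
            intro j' hj'1 hj'2
            exact (IH (i + j' - 1) (by omega)).1 i j' hi1 hi2 hj'1 (by omega) (by omega)
          have : (μ (s + i) * ν j) * μ t ∈ p := by
            have : (μ (s + i) * ν j) * μ t = ν j * (μ (s + i) * μ t) := by ring
            rw [this]
            exact p.mul_mem_left _ hmm
          rcases hp.mem_or_mem this with h | h
          · exact absurd h hnot
          · exact h
        · exact p.zero_mem
      -- conclude : μ (s+i) * ν j ∈ p, contradiction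
      apply hnot
      have hsum : μ (s + i) * ν j + ∑ q ∈ (svD u s v l).erase (i, j), μ (s + q.1) * ν q.2
          = ∑ q ∈ svD u s v l, μ (s + q.1) * ν q.2 :=
        Finset.add_sum_erase _ (fun q => μ (s + q.1) * ν q.2) hmemD
      have : μ (s + i) * ν j = svg u s v μ ν l
          - (∑ q ∈ (svD u s v l).erase (i, j), μ (s + q.1) * ν q.2)
          - (if u - s + 1 ≤ l ∧ l ≤ u then μ (l + s - u) else 0) := by
        rw [svg, ← hsum]; ring
      rw [this]
      exact p.sub_mem (p.sub_mem hgl (Ideal.sum_mem p hothers)) hm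
    refine ⟨hprod, ?_⟩
    intro h1 h2
    have hl1 : 1 ≤ l := by omega
    have hgl : svg u s v μ ν l ∈ p := hg l hl1 (by omega)
    have hδ : (∑ q ∈ svD u s v l, μ (s + q.1) * ν q.2) ∈ p := by
      refine Ideal.sum_mem p ?_
      intro q hq
      obtain ⟨⟨hq1, hq2⟩, ⟨hq3, hq4⟩, hq5⟩ := mem_svD.mp hq
      exact hprod q.1 q.2 hq1 hq2 hq3 hq4 hq5
    have : μ (l + s - u) = svg u s v μ ν l - (∑ q ∈ svD u s v l, μ (s + q.1) * ν q.2) := by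
      rw [svg, if_pos ⟨h1, h2⟩]; ring
    rw [this]
    exact p.sub_mem hgl hδ
  constructor
  · intro i j hi1 hi2 hj1 hj2
    exact (main (i + j - 1)).1 i j hi1 hi2 hj1 hj2 (by omega)
  · intro t ht1 ht2
    have := (main (u - s + t)).2 (by omega) (by omega)
    have heq : u - s + t + s - u = t := by omega
    rwa [heq] at this

/-- With the hypotheses of the Corollary, and `r = u + v - s - 1` if `s ≤ v - 2`, `r = u`
otherwise, there exist `γ 1, …, γ r` generating `I ∩ J` up to radical which moreover
satisfy `(γ 1, …, γ i) ⊆ (μ (s+1), …, μ (s+i))` for `1 ≤ i ≤ u - s`, and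
`(γ 1, …, γ i) ⊆ (μ (s+1), …, μ u, μ 1, …, μ (i-u+s))` for `u - s + 1 ≤ i ≤ u`. -/
theorem stmt_5 {R : Type*} [CommRing R] [IsNoetherianRing R]
    (u v s : ℕ) (μ ν : ℕ → R)
    (hs : 1 ≤ s) (hsu : s < u) (hsv : s ≤ v)
    (I J : Ideal R)
    (hI : I = Ideal.span (μ '' Set.Icc 1 u)) (hJ : J = Ideal.span (ν '' Set.Icc 1 v))
    (hsub : ∀ i, 1 ≤ i → i ≤ s →
      Ideal.span (μ '' Set.Icc 1 i) ≤ Ideal.span (ν '' Set.Icc 1 i))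
    (r : ℕ) (hr : r = if s + 2 ≤ v then u + v - s - 1 else u) :
    ∃ γ : ℕ → R,
      (I ⊓ J).radical = (Ideal.span (γ '' Set.Icc 1 r)).radical ∧
      (∀ i, 1 ≤ i → i ≤ u - s →
        Ideal.span (γ '' Set.Icc 1 i) ≤ Ideal.span (μ '' Set.Icc (s + 1) (s + i))) ∧
      (∀ i, u - s + 1 ≤ i → i ≤ u →
        Ideal.span (γ '' Set.Icc 1 i) ≤
          Ideal.span (μ '' Set.Icc (s + 1) u ∪ μ '' Set.Icc 1 (i + s - u))) := by
  have hur : u ≤ r := by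
    rcases le_or_gt (s + 2) v with h | h
    · rw [hr, if_pos h]; omega
    · rw [hr, if_neg (by omega)]
  have hvr : u - s + v - 1 ≤ r := by
    rcases le_or_gt (s + 2) v with h | h
    · rw [hr, if_pos h]; omega
    · rw [hr, if_neg (by omega)]; omega
  refine ⟨svg u s v μ ν, ?_, ?_, ?_⟩
  · -- radical equality
    have hAle : Ideal.span (svg u s v μ ν '' Set.Icc 1 r) ≤ I ⊓ J := by
      rw [Ideal.span_le]
      rintro x ⟨k, ⟨hk1, hk2⟩, rfl⟩
      rw [SetLike.mem_coe, Submodule.mem_inf]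
      constructor
      · -- ∈ I
        rw [hI, svg]
        refine Ideal.add_mem _ (Ideal.sum_mem _ ?_) ?_
        · intro q hq
          obtain ⟨⟨hq1, hq2⟩, ⟨hq3, hq4⟩, hq5⟩ := mem_svD.mp hq
          exact Ideal.mul_mem_right _ _
            (Ideal.subset_span ⟨s + q.1, ⟨by omega, by omega⟩, rfl⟩)
        · split_ifs with hc
          · exact Ideal.subset_span ⟨k + s - u, ⟨by omega, by omega⟩, rfl⟩
          · exact Ideal.zero_mem _
      · -- ∈ J
        rw [hJ, svg]
        refine Ideal.add_mem _ (Ideal.sum_mem _ ?_) ?_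
        · intro q hq
          obtain ⟨⟨hq1, hq2⟩, ⟨hq3, hq4⟩, hq5⟩ := mem_svD.mp hq
          exact Ideal.mul_mem_left _ _
            (Ideal.subset_span ⟨q.2, ⟨hq3, hq4⟩, rfl⟩)
        · split_ifs with hc
          · set t := k + s - u with ht
            have ht1 : 1 ≤ t := by omega
            have ht2 : t ≤ s := by omega
            have h1 : μ t ∈ Ideal.span (ν '' Set.Icc 1 t) :=
              hsub t ht1 ht2 (Ideal.subset_span ⟨t, ⟨ht1, le_refl t⟩, rfl⟩)
            refine Ideal.span_mono ?_ h1
            exact Set.image_mono (Set.Icc_subset_Icc (le_refl 1) (by omega))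
          · exact Ideal.zero_mem _
    have hBle : I ⊓ J ≤ (Ideal.span (svg u s v μ ν '' Set.Icc 1 r)).radical := by
      rw [Ideal.radical_eq_sInf]
      refine le_sInf ?_
      rintro p ⟨hle, hprime⟩
      have hg : ∀ k, 1 ≤ k → k ≤ r → svg u s v μ ν k ∈ p := fun k hk1 hk2 =>
        hle (Ideal.subset_span ⟨k, ⟨hk1, hk2⟩, rfl⟩)
      obtain ⟨hA, hB⟩ := sv_key u v s μ ν hs hsu hsv hsub r hur hvr p hprime hg
      intro x hx
      rw [Submodule.mem_inf] at hx
      obtain ⟨hxI, hxJ⟩ := hx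
      have hsplit : Set.Icc 1 u = Set.Icc 1 s ∪ Set.Icc (s + 1) u := by
        ext n; simp only [Set.mem_Icc, Set.mem_union]; omega
      rw [hI, hsplit, Set.image_union, Ideal.span_union, Submodule.mem_sup] at hxI
      obtain ⟨y, hy, z, hz, hyz⟩ := hxI
      have hyp : y ∈ p := by
        refine Ideal.span_le.mpr ?_ hy
        rintro w ⟨t, ⟨ht1, ht2⟩, rfl⟩
        exact hB t ht1 ht2
      have hyJ : y ∈ J := by
        rw [hJ]
        refine Ideal.span_mono (Set.image_mono (Set.Icc_subset_Icc (le_refl 1) hsv))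
          (hsub s hs (le_refl s) (Ideal.span_mono (le_refl _) hy))
      have hzJ : z ∈ J := by
        have : z = x - y := by rw [← hyz]; ring
        rw [this]; exact J.sub_mem hxJ hyJ
      -- z * z ∈ p
      have hgz : ∀ g ∈ μ '' Set.Icc (s + 1) u, g * z ∈ p := by
        rintro g ⟨m, ⟨hm1, hm2⟩, rfl⟩
        have hzJ' : z ∈ Ideal.span (ν '' Set.Icc 1 v) := by rwa [hJ] at hzJ
        refine span_mul_mem p (μ m) _ ?_ z hzJ'
        rintro w ⟨j, ⟨hj1, hj2⟩, rfl⟩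
        have hm : s + (m - s) = m := by omega
        rw [← hm]
        exact hA (m - s) j (by omega) (by omega) hj1 hj2
      have hzz : z * z ∈ p := by
        refine span_mul_mem p z _ ?_ z hz
        intro g hg'
        rw [mul_comm]; exact hgz g hg'
      have hzp : z ∈ p := by rcases hprime.mem_or_mem hzz with h | h <;> exact h
      rw [← hyz]
      exact p.add_mem hyp hzp
    refine le_antisymm ?_ (Ideal.radical_mono hAle)
    rw [← Ideal.radical_idem (Ideal.span (svg u s v μ ν '' Set.Icc 1 r))]
    exact Ideal.radical_mono hBle
  · -- first containment
    intro i hi1 hi2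
    rw [Ideal.span_le]
    rintro x ⟨k, ⟨hk1, hk2⟩, rfl⟩
    rw [svg, if_neg (by omega), add_zero]
    refine Ideal.sum_mem _ ?_
    intro q hq
    obtain ⟨⟨hq1, hq2⟩, ⟨hq3, hq4⟩, hq5⟩ := mem_svD.mp hq
    exact Ideal.mul_mem_right _ _
      (Ideal.subset_span ⟨s + q.1, ⟨by omega, by omega⟩, rfl⟩)
  · -- second containment
    intro i hi1 hi2
    rw [Ideal.span_le]
    rintro x ⟨k, ⟨hk1, hk2⟩, rfl⟩
    rw [svg]
    refine Ideal.add_mem _ (Ideal.sum_mem _ ?_) ?_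
    · intro q hq
      obtain ⟨⟨hq1, hq2⟩, ⟨hq3, hq4⟩, hq5⟩ := mem_svD.mp hq
      exact Ideal.mul_mem_right _ _
        (Ideal.subset_span (Or.inl ⟨s + q.1, ⟨by omega, by omega⟩, rfl⟩))
    · split_ifs with hc
      · exact Ideal.subset_span (Or.inr ⟨k + s - u, ⟨by omega, by omega⟩, rfl⟩)
      · exact Ideal.zero_mem _
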